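/- Let H be a complex Hilbert space, let N ⊆ M ⊆ B(H) be unital *-subalgebras, let Ω ∈ H be cyclic for M, let J : H → H be an antiunitary involution satisfying J(aΩ) = a*Ω for every a ∈ M, let E : M → M be a conditional expectation from M onto N, and let e : H → H be a bounded self-adjoint operator with e(aΩ) = E(a)Ω for all a ∈ M. Then for every a ∈ M that commutes with all elements of N, one has a ∘ e = (J ∘ a* ∘ J) ∘ e and e ∘ a = e ∘ (J ∘ a* ∘ J) as operators on H. -/

import Mathlib

/-- **Entanglement property of the Jones projection.**
For `a ∈ M` commuting with all of `N`, one has `a ∘ e = (J ∘ a* ∘ J) ∘ e` and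
`e ∘ a = e ∘ (J ∘ a* ∘ J)`, where `J` is the modular conjugation (an antiunitary
involution with `J (a Ω) = a* Ω`) and `e` is the Jones projection for the
conditional expectation `E : M → N`. -/
theorem stmt_4
    {H : Type*} [NormedAddCommGroup H] [InnerProductSpace ℂ H] [CompleteSpace H]
    (M N : StarSubalgebra ℂ (H →L[ℂ] H))
    (hNM : N ≤ M)
    (Ω : H)
    (hcyclic : Dense ((Submodule.span ℂ
      (Set.range fun a : M => (a : H →L[ℂ] H) Ω) : Submodule ℂ H) : Set H))
    (J : H → H)
    (hJcont : Continuous J)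
    (hJadd : ∀ x y : H, J (x + y) = J x + J y)
    (hJsmul : ∀ (c : ℂ) (x : H), J (c • x) = (starRingEnd ℂ c) • J x)
    (hJinv : ∀ x : H, J (J x) = x)
    (hJinner : ∀ x y : H, (inner ℂ (J x) (J y) : ℂ) = (inner ℂ y x : ℂ))
    (hJ : ∀ a : M, J ((a : H →L[ℂ] H) Ω) = (star (a : H →L[ℂ] H)) Ω)
    (E : M →ₗ[ℂ] M)
    (hrange : ∀ a : M, (↑(E a) : H →L[ℂ] H) ∈ N)
    (hunit : E 1 = 1)
    (hfix : ∀ b : M, (↑b : H →L[ℂ] H) ∈ N → E b = b)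
    (hbimod : ∀ b₁ a b₂ : M, (↑b₁ : H →L[ℂ] H) ∈ N → (↑b₂ : H →L[ℂ] H) ∈ N →
      E (b₁ * a * b₂) = b₁ * E a * b₂)
    (hstar : ∀ a : M, E (star a) = star (E a))
    (e : H →L[ℂ] H)
    (hesa : IsSelfAdjoint e)
    (he : ∀ a : M, e ((a : H →L[ℂ] H) Ω) = (↑(E a) : H →L[ℂ] H) Ω) :
    ∀ a : M, (∀ b : H →L[ℂ] H, b ∈ N → (a : H →L[ℂ] H) * b = b * (a : H →L[ℂ] H)) →
      (∀ x : H, (a : H →L[ℂ] H) (e x) = J ((star (a : H →L[ℂ] H)) (J (e x)))) ∧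
      (∀ x : H, e ((a : H →L[ℂ] H) x) = e (J ((star (a : H →L[ℂ] H)) (J x)))) := by
  have hJ0 : J 0 = 0 := by simpa using hJsmul 0 0
  have hswap : ∀ u v : H, (inner ℂ u (J v) : ℂ) = inner ℂ v (J u) := by
    intro u v
    calc (inner ℂ u (J v) : ℂ) = inner ℂ (J (J u)) (J v) := by rw [hJinv]
    _ = inner ℂ v (J u) := hJinner _ _
  -- Claim 1, for any element of M commuting with N
  have key : ∀ a : M, (∀ b : H →L[ℂ] H, b ∈ N → (a : H →L[ℂ] H) * b = b * (a : H →L[ℂ] H)) →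
      ∀ x : H, (a : H →L[ℂ] H) (e x) = J ((star (a : H →L[ℂ] H)) (J (e x))) := by
    intro a hcomm
    have hfun : (fun x : H => (a : H →L[ℂ] H) (e x))
        = fun x : H => J ((star (a : H →L[ℂ] H)) (J (e x))) := by
      apply Continuous.ext_on hcyclic
      · exact (a : H →L[ℂ] H).continuous.comp e.continuous
      · exact hJcont.comp (((star (a : H →L[ℂ] H)).continuous).comp
          (hJcont.comp e.continuous))
      · intro x hx
        induction hx using Submodule.span_induction with
        | mem x hx =>
          obtain ⟨m, rfl⟩ := hx
          simp only
          rw [he m, hJ (E m)]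
          have h1 : (star (a : H →L[ℂ] H)) ((star (↑(E m) : H →L[ℂ] H)) Ω)
              = (star ((E m * a : M) : H →L[ℂ] H)) Ω := by
            simp [star_mul, ContinuousLinearMap.mul_apply]
          rw [h1, ← hJ (E m * a), hJinv]
          have h3 := hcomm ↑(E m) (hrange m)
          calc (a : H →L[ℂ] H) ((↑(E m) : H →L[ℂ] H) Ω)
              = ((a : H →L[ℂ] H) * (↑(E m) : H →L[ℂ] H)) Ω := rfl
            _ = ((↑(E m) : H →L[ℂ] H) * (a : H →L[ℂ] H)) Ω := by rw [h3]
            _ = ((E m * a : M) : H →L[ℂ] H) Ω := by norm_cast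
        | zero => simp [hJ0]
        | add u v _ _ hu hv =>
          simp only [map_add, hJadd, hu, hv]
        | smul c u _ hu =>
          simp only [map_smul, hJsmul, hu, Complex.conj_conj]
    intro x
    exact congrFun hfun x
  intro a hcomm
  have hmemsa : (star ((a : M) : H →L[ℂ] H)) = ((star a : M) : H →L[ℂ] H) := rfl
  have hcomm' : ∀ b : H →L[ℂ] H, b ∈ N →
      ((star a : M) : H →L[ℂ] H) * b = b * ((star a : M) : H →L[ℂ] H) := by
    intro b hb
    have h := hcomm (star b) (star_mem hb)
    have := congrArg star h
    simpa [star_mul] using this.symm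
  have keyA := key a hcomm
  have keyB := key (star a) hcomm'
  refine ⟨keyA, ?_⟩
  intro x
  apply ext_inner_left ℂ
  intro y
  have hsae : ∀ z w : H, (inner ℂ w (e z) : ℂ) = inner ℂ (e w) z := by
    intro z w
    nth_rewrite 1 [← hesa.adjoint_eq]
    exact ContinuousLinearMap.adjoint_inner_right e w z
  have hadj : ∀ (T : H →L[ℂ] H) (u v : H), (inner ℂ ((star T) u) v : ℂ) = inner ℂ u (T v) := by
    intro T u v
    rw [ContinuousLinearMap.star_eq_adjoint, ContinuousLinearMap.adjoint_inner_left]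
  have hBy : (star ((a : M) : H →L[ℂ] H)) (e y) = J (((a : M) : H →L[ℂ] H) (J (e y))) := by
    have := keyB y
    simpa [star_star] using this
  calc (inner ℂ y (e ((a : H →L[ℂ] H) x)) : ℂ)
      = inner ℂ (e y) ((a : H →L[ℂ] H) x) := hsae _ _
    _ = inner ℂ ((star (a : H →L[ℂ] H)) (e y)) x := (hadj _ _ _).symm
    _ = inner ℂ (J ((a : H →L[ℂ] H) (J (e y)))) x := by rw [hBy]
    _ = inner ℂ (J ((a : H →L[ℂ] H) (J (e y)))) (J (J x)) := by rw [hJinv]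
    _ = inner ℂ (J x) ((a : H →L[ℂ] H) (J (e y))) := hJinner _ _
    _ = inner ℂ ((star (a : H →L[ℂ] H)) (J x)) (J (e y)) := (hadj _ _ _).symm
    _ = inner ℂ (e y) (J ((star (a : H →L[ℂ] H)) (J x))) := (hswap _ _).symm
    _ = inner ℂ y (e (J ((star (a : H →L[ℂ] H)) (J x)))) := (hsae _ _).symm
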